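/- Let k ≥ 2 and 0 < ε < 1/4. Let f, g : {-1,1}^n → {1,...,n} with Pr[g(X) ≥ k] ≤ ε, where X is uniform on {-1,1}^n. Then for independent uniform X, Y one has E[X_{f(Y)} · Y_{g(X)}] ≤ 1/2 − (1−4ε)·2^{−k+1}. -/

import Mathlib

open Finset Real
open scoped Classical

/-- The real value of a coordinate: `true ↦ 1`, `false ↦ -1`, encoding `{-1,1}`. -/
noncomputable def chi (b : Bool) : ℝ := if b then 1 else -1

/-- Expectation with respect to the uniform measure on `{-1,1}^n`. -/
noncomputable def Ex (n : ℕ) (φ : (Fin n → Bool) → ℝ) : ℝ :=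
  (∑ x : Fin n → Bool, φ x) / 2 ^ n

/-- Probability with respect to the uniform measure on `{-1,1}^n`. -/
noncomputable def Pr (n : ℕ) (p : (Fin n → Bool) → Prop) : ℝ :=
  Ex n (fun x => if p x then 1 else 0)

/-- Expectation for two independent uniform vectors on `{-1,1}^n`. -/
noncomputable def Ex2 (n : ℕ) (φ : (Fin n → Bool) → (Fin n → Bool) → ℝ) : ℝ :=
  (∑ x : Fin n → Bool, ∑ y : Fin n → Bool, φ x y) / 2 ^ (2 * n)

/-- Probability for two independent uniform vectors on `{-1,1}^n`. -/
noncomputable def Pr2 (n : ℕ) (p : (Fin n → Bool) → (Fin n → Bool) → Prop) : ℝ :=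
  Ex2 n (fun x y => if p x y then 1 else 0)

/-- Fourier coefficient `ĥ(S) = E[h(X)·∏_{i∈S} X_i]`. -/
noncomputable def coeff (n : ℕ) (h : (Fin n → Bool) → ℝ) (S : Finset (Fin n)) : ℝ :=
  Ex n (fun x => h x * ∏ i ∈ S, chi (x i))

/-- Pointwise negation `x ↦ -x` on `{-1,1}^n`. -/
def neg (n : ℕ) (x : Fin n → Bool) : Fin n → Bool := fun i => !(x i)

lemma chi_not (b : Bool) : chi (!b) = -chi b := by cases b <;> simp [chi]

lemma neg_invol (n : ℕ) : Function.Involutive (neg n) := by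
  intro x; funext i; simp [neg]

lemma sum_neg_comp (n : ℕ) (F : (Fin n → Bool) → ℝ) :
    (∑ z : Fin n → Bool, F (neg n z)) = ∑ z : Fin n → Bool, F z := by
  simpa using Equiv.sum_comp (neg_invol n).toPerm F

def Cb (n k : ℕ) (y : Fin n → Bool) : Prop :=
  ∀ i j : Fin n, i.val + 2 ≤ k → j.val + 2 ≤ k → y i = y j

lemma pt_bound (a a' b b' : Bool) (C : Prop) [Decidable C] :
    (chi a - chi a') * (chi b - chi b') ≤
      4 * ((if a ≠ a' ∧ ¬C then (1:ℝ) else 0) + (if b ≠ b' ∧ C then (1:ℝ) else 0)) := by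
  by_cases hC : C <;> cases a <;> cases a' <;> cases b <;> cases b' <;>
      simp [chi, hC] <;> norm_num

lemma flip_sum_le (n : ℕ) (i j : Fin n) :
    (∑ x : Fin n → Bool, if x i ≠ x j then (1:ℝ) else 0) ≤ 2 ^ n / 2 := by
  classical
  set e : (Fin n → Bool) → (Fin n → Bool) := fun x => Function.update x i (!x i) with he
  have einv : Function.Involutive e := by
    intro x; funext a
    by_cases h : a = i
    · subst h; simp [he]
    · simp [he, Function.update_of_ne h]
  have hsum : (∑ x : Fin n → Bool, if (e x) i ≠ (e x) j then (1:ℝ) else 0)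
      = ∑ x : Fin n → Bool, if x i ≠ x j then (1:ℝ) else 0 := by
    convert Equiv.sum_comp einv.toPerm (fun x => if x i ≠ x j then (1:ℝ) else 0) <;> rfl
  have key : ∀ x : Fin n → Bool,
      (if x i ≠ x j then (1:ℝ) else 0) + (if (e x) i ≠ (e x) j then (1:ℝ) else 0) ≤ 1 := by
    intro x
    by_cases h : j = i
    · subst h; simp
    · have h1 : (e x) i = !(x i) := by simp [he]
      have h2 : (e x) j = x j := by simp [he, Function.update_of_ne h]
      rw [h1, h2]
      cases hxi : x i <;> cases hxj : x j <;> simp [hxi, hxj]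
  have hcard : (∑ _x : Fin n → Bool, (1:ℝ)) = 2 ^ n := by
    simp [Finset.sum_const, Fintype.card_fun]
  have h2 : (∑ x : Fin n → Bool, if x i ≠ x j then (1:ℝ) else 0)
      + (∑ x : Fin n → Bool, if (e x) i ≠ (e x) j then (1:ℝ) else 0) ≤ 2 ^ n := by
    rw [← Finset.sum_add_distrib]
    calc (∑ x : Fin n → Bool, ((if x i ≠ x j then (1:ℝ) else 0) + (if (e x) i ≠ (e x) j then (1:ℝ) else 0)))
        ≤ ∑ _x : Fin n → Bool, (1:ℝ) := Finset.sum_le_sum fun x _ => key x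
      _ = 2 ^ n := hcard
  rw [hsum] at h2
  linarith

section A
variable (n : ℕ) (f g : (Fin n → Bool) → Fin n)

lemma hyneg (x : Fin n → Bool) (j : Fin n) :
    (∑ y : Fin n → Bool, chi (x (f (neg n y))) * chi (y j))
      = ∑ y : Fin n → Bool, -(chi (x (f y)) * chi (y j)) := by
  refine Fintype.sum_equiv (neg_invol n).toPerm _ _ ?_
  intro y
  simp only [Function.Involutive.coe_toPerm]
  have h2 : (neg n y) j = !(y j) := rfl
  rw [h2, chi_not]; ring

lemma hxneg3 :
    (∑ x : Fin n → Bool, ∑ y : Fin n → Bool, chi (x (f y)) * chi (y (g (neg n x))))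
      = ∑ x : Fin n → Bool, -(∑ y : Fin n → Bool, chi (x (f y)) * chi (y (g x))) := by
  refine Fintype.sum_equiv (neg_invol n).toPerm _ _ ?_
  intro x
  simp only [Function.Involutive.coe_toPerm]
  rw [← Finset.sum_neg_distrib]
  refine Finset.sum_congr rfl fun y _ => ?_
  have h2 : (neg n x) (f y) = !(x (f y)) := rfl
  rw [h2, chi_not]; ring

lemma hxneg4 :
    (∑ x : Fin n → Bool, ∑ y : Fin n → Bool, chi (x (f (neg n y))) * chi (y (g (neg n x))))
      = ∑ x : Fin n → Bool, -(∑ y : Fin n → Bool, chi (x (f (neg n y))) * chi (y (g x))) := by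
  refine Fintype.sum_equiv (neg_invol n).toPerm _ _ ?_
  intro x
  simp only [Function.Involutive.coe_toPerm]
  rw [← Finset.sum_neg_distrib]
  refine Finset.sum_congr rfl fun y _ => ?_
  have h2 : (neg n x) (f (neg n y)) = !(x (f (neg n y))) := rfl
  rw [h2, chi_not]; ring

lemma hexp :
    (∑ x : Fin n → Bool, ∑ y : Fin n → Bool,
      (chi (x (f y)) - chi (x (f (neg n y)))) * (chi (y (g x)) - chi (y (g (neg n x)))))
    = 4 * ∑ x : Fin n → Bool, ∑ y : Fin n → Bool, chi (x (f y)) * chi (y (g x)) := by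
  have expand : ∀ x y : Fin n → Bool,
      (chi (x (f y)) - chi (x (f (neg n y)))) * (chi (y (g x)) - chi (y (g (neg n x))))
        = chi (x (f y)) * chi (y (g x)) - chi (x (f (neg n y))) * chi (y (g x))
          - chi (x (f y)) * chi (y (g (neg n x))) + chi (x (f (neg n y))) * chi (y (g (neg n x))) := by
    intro x y; ring
  simp_rw [expand, Finset.sum_add_distrib, Finset.sum_sub_distrib]
  have h2 : (∑ x : Fin n → Bool, ∑ y : Fin n → Bool, chi (x (f (neg n y))) * chi (y (g x)))
      = -∑ x : Fin n → Bool, ∑ y : Fin n → Bool, chi (x (f y)) * chi (y (g x)) := by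
    rw [← Finset.sum_neg_distrib]
    exact Finset.sum_congr rfl fun x _ => by rw [hyneg n f x (g x), Finset.sum_neg_distrib]
  have h3 : (∑ x : Fin n → Bool, ∑ y : Fin n → Bool, chi (x (f y)) * chi (y (g (neg n x))))
      = -∑ x : Fin n → Bool, ∑ y : Fin n → Bool, chi (x (f y)) * chi (y (g x)) := by
    rw [hxneg3 n f g, Finset.sum_neg_distrib]
  have h4 : (∑ x : Fin n → Bool, ∑ y : Fin n → Bool, chi (x (f (neg n y))) * chi (y (g (neg n x))))
      = ∑ x : Fin n → Bool, ∑ y : Fin n → Bool, chi (x (f y)) * chi (y (g x)) := by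
    rw [hxneg4 n f g, Finset.sum_neg_distrib, h2]; ring
  rw [h2, h3, h4]; ring

end A

lemma count_Cb (n k : ℕ) (hn : 0 < n) (hk : 2 ≤ k) :
    (2:ℝ) ^ ((2:ℤ) - k) * 2 ^ n ≤ ∑ y : Fin n → Bool, (if Cb n k y then (1:ℝ) else 0) := by
  classical
  set i0 : Fin n := ⟨0, hn⟩ with hi0
  set q : Fin n → Prop := fun i => i.val + 2 ≤ k ∧ i.val ≠ 0 with hq
  have hq0 : ¬ q i0 := by simp [hq, hi0]
  -- injection from ({i // ¬ q i} → Bool) into {y // Cb n k y}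
  have keyval : ∀ (z : {i : Fin n // ¬ q i} → Bool) (c : Fin n), c.val + 2 ≤ k →
      (if h : q c then z ⟨i0, hq0⟩ else z ⟨c, h⟩) = z ⟨i0, hq0⟩ := by
    intro z c hc
    by_cases h : q c
    · rw [dif_pos h]
    · rw [dif_neg h]
      have hc0 : c = i0 := by
        have : c.val = 0 := by
          by_contra hne
          exact h ⟨hc, hne⟩
        exact Fin.ext (by simpa [hi0] using this)
      subst hc0; rfl
  set J : ({i : Fin n // ¬ q i} → Bool) → {y : Fin n → Bool // Cb n k y} := fun z =>
    ⟨fun i => if h : q i then z ⟨i0, hq0⟩ else z ⟨i, h⟩, by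
      intro a b ha hb
      show (if h : q a then z ⟨i0, hq0⟩ else z ⟨a, h⟩) = (if h : q b then z ⟨i0, hq0⟩ else z ⟨b, h⟩)
      rw [keyval z a ha, keyval z b hb]⟩ with hJ
  have hJinj : Function.Injective J := by
    intro z z' h
    funext i
    have h2 := congrFun (Subtype.ext_iff.mp h) i.1
    simp only [hJ] at h2
    rw [dif_neg i.2, dif_neg i.2] at h2
    simpa using h2
  have hc1 : Fintype.card ({i : Fin n // ¬ q i} → Bool)
      ≤ Fintype.card {y : Fin n → Bool // Cb n k y} :=
    Fintype.card_le_of_injective J hJinj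
  have hcfun : Fintype.card ({i : Fin n // ¬ q i} → Bool)
      = 2 ^ (Fintype.card {i : Fin n // ¬ q i}) := by
    simp [Fintype.card_fun]
  have hqcard : Fintype.card {i : Fin n // q i} ≤ k - 2 := by
    rw [Fintype.card_subtype]
    have hle : (Finset.univ.filter q).card ≤ (Finset.range (k - 2)).card := by
      refine Finset.card_le_card_of_injOn (fun i => i.val - 1) ?_ ?_
      · intro i hi
        simp only [Finset.mem_coe, Finset.mem_filter, Finset.mem_univ, true_and, hq] at hi
        simp only [Finset.mem_coe, Finset.mem_range]
        omega
      · intro a ha b hb hab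
        simp only [Finset.coe_filter, Set.mem_setOf_eq, hq] at ha hb
        have hab' : a.val - 1 = b.val - 1 := hab
        exact Fin.ext (by omega)
    simpa using hle
  have hqn : Fintype.card {i : Fin n // q i} ≤ n := by
    simpa using Fintype.card_subtype_le q
  have hcompl : Fintype.card {i : Fin n // ¬ q i} = n - Fintype.card {i : Fin n // q i} := by
    simpa using Fintype.card_subtype_compl q
  have hP : (∑ y : Fin n → Bool, (if Cb n k y then (1:ℝ) else 0))
      = ((Finset.univ.filter (fun y => Cb n k y)).card : ℝ) := by
    simp [Finset.sum_boole]
  have hcsub : Fintype.card {y : Fin n → Bool // Cb n k y}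
      = (Finset.univ.filter (fun y => Cb n k y)).card := Fintype.card_subtype _
  -- integer exponent comparison
  have hzineq : ((n:ℤ) + 2 - k) ≤ (Fintype.card {i : Fin n // ¬ q i} : ℤ) := by
    rw [hcompl]; omega
  have h1 : (2:ℝ) ^ ((2:ℤ) - k) * 2 ^ n = (2:ℝ) ^ ((n:ℤ) + 2 - k) := by
    rw [← zpow_natCast (2:ℝ) n, ← zpow_add₀ (two_ne_zero)]
    congr 1; ring
  have h2 : (2:ℝ) ^ ((n:ℤ) + 2 - k) ≤ (2:ℝ) ^ ((Fintype.card {i : Fin n // ¬ q i} : ℤ)) :=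
    zpow_le_zpow_right₀ one_le_two hzineq
  have h3 : (2:ℝ) ^ ((Fintype.card {i : Fin n // ¬ q i} : ℤ))
      = ((2 ^ (Fintype.card {i : Fin n // ¬ q i}) : ℕ) : ℝ) := by
    push_cast
    rw [zpow_natCast]
  have h4 : (2 ^ (Fintype.card {i : Fin n // ¬ q i}) : ℕ)
      ≤ (Finset.univ.filter (fun y => Cb n k y)).card := by
    rw [← hcfun, ← hcsub]; exact hc1
  rw [hP, h1]
  calc (2:ℝ) ^ ((n:ℤ) + 2 - k) ≤ (2:ℝ) ^ ((Fintype.card {i : Fin n // ¬ q i} : ℤ)) := h2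
    _ = ((2 ^ (Fintype.card {i : Fin n // ¬ q i}) : ℕ) : ℝ) := h3
    _ ≤ _ := by exact_mod_cast Nat.cast_le.mpr h4

lemma stmt10_main (n k : ℕ) (hn : 0 < n) (hk : 2 ≤ k) (ε : ℝ) (hε0 : 0 < ε) (hε1 : ε < 1 / 4)
    (f g : (Fin n → Bool) → Fin n)
    (hg : Pr n (fun x => k ≤ (g x).val + 1) ≤ ε) :
    Ex2 n (fun x y => chi (x (f y)) * chi (y (g x))) ≤
      1 / 2 - (1 - 4 * ε) * (2 : ℝ) ^ (-(k : ℤ) + 1) := by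
  classical
  have hQpos : (0:ℝ) < 2 ^ n := by positivity
  have hcardfun : ((Fintype.card (Fin n → Bool)) : ℝ) = 2 ^ n := by
    simp [Fintype.card_fun]
  -- notation
  set T : ℝ := ∑ x : Fin n → Bool, ∑ y : Fin n → Bool, chi (x (f y)) * chi (y (g x)) with hTdef
  set P : ℝ := ∑ y : Fin n → Bool, (if Cb n k y then (1:ℝ) else 0) with hPdef
  -- bound on bad-index probability
  have hB : (∑ x : Fin n → Bool, if k ≤ (g x).val + 1 then (1:ℝ) else 0) ≤ ε * 2 ^ n := by
    have h2 : Pr n (fun x => k ≤ (g x).val + 1)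
        = (∑ x : Fin n → Bool, if k ≤ (g x).val + 1 then (1:ℝ) else 0) / 2 ^ n := by
      unfold Pr Ex
      congr 1
      refine Finset.sum_congr rfl fun x _ => ?_
      split_ifs with h <;> simp [h]
    rw [h2, div_le_iff₀ hQpos] at hg
    linarith
  have hBneg : (∑ x : Fin n → Bool, if k ≤ (g (neg n x)).val + 1 then (1:ℝ) else 0)
      = ∑ x : Fin n → Bool, if k ≤ (g x).val + 1 then (1:ℝ) else 0 :=
    sum_neg_comp n (fun x => if k ≤ (g x).val + 1 then (1:ℝ) else 0)
  -- step 1: T ≤ sum of indicators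
  have hTle : T ≤ (∑ x : Fin n → Bool, ∑ y : Fin n → Bool,
        (if (x (f y) ≠ x (f (neg n y))) ∧ ¬ Cb n k y then (1:ℝ) else 0))
      + (∑ x : Fin n → Bool, ∑ y : Fin n → Bool,
        (if (y (g x) ≠ y (g (neg n x))) ∧ Cb n k y then (1:ℝ) else 0)) := by
    have h1 : 4 * T ≤ ∑ x : Fin n → Bool, ∑ y : Fin n → Bool,
        (4 * ((if (x (f y) ≠ x (f (neg n y))) ∧ ¬ Cb n k y then (1:ℝ) else 0)
          + (if (y (g x) ≠ y (g (neg n x))) ∧ Cb n k y then (1:ℝ) else 0))) := by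
      rw [hTdef, ← hexp n f g]
      exact Finset.sum_le_sum fun x _ => Finset.sum_le_sum fun y _ => pt_bound _ _ _ _ _
    have h2 : (∑ x : Fin n → Bool, ∑ y : Fin n → Bool,
        (4 * ((if (x (f y) ≠ x (f (neg n y))) ∧ ¬ Cb n k y then (1:ℝ) else 0)
          + (if (y (g x) ≠ y (g (neg n x))) ∧ Cb n k y then (1:ℝ) else 0))))
        = 4 * ((∑ x : Fin n → Bool, ∑ y : Fin n → Bool,
            (if (x (f y) ≠ x (f (neg n y))) ∧ ¬ Cb n k y then (1:ℝ) else 0))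
          + (∑ x : Fin n → Bool, ∑ y : Fin n → Bool,
            (if (y (g x) ≠ y (g (neg n x))) ∧ Cb n k y then (1:ℝ) else 0))) := by
      simp_rw [mul_add, Finset.sum_add_distrib, ← Finset.mul_sum]
    rw [h2] at h1
    linarith
  -- step 2: first indicator sum
  have hI1 : (∑ x : Fin n → Bool, ∑ y : Fin n → Bool,
      (if (x (f y) ≠ x (f (neg n y))) ∧ ¬ Cb n k y then (1:ℝ) else 0))
      ≤ (2 ^ n - P) * (2 ^ n / 2) := by
    rw [Finset.sum_comm]
    have hb : ∀ y : Fin n → Bool,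
        (∑ x : Fin n → Bool, if (x (f y) ≠ x (f (neg n y))) ∧ ¬ Cb n k y then (1:ℝ) else 0)
        ≤ 2 ^ n / 2 - (if Cb n k y then (1:ℝ) else 0) * (2 ^ n / 2) := by
      intro y
      by_cases hC : Cb n k y
      · simp [hC]
      · have heq : ∀ x : Fin n → Bool,
            (if (x (f y) ≠ x (f (neg n y))) ∧ ¬ Cb n k y then (1:ℝ) else 0)
            = (if x (f y) ≠ x (f (neg n y)) then (1:ℝ) else 0) := by
          intro x; simp [hC]
        rw [if_neg hC]
        simp only [heq]
        have := flip_sum_le n (f y) (f (neg n y))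
        linarith
    calc (∑ y : Fin n → Bool, ∑ x : Fin n → Bool,
          (if (x (f y) ≠ x (f (neg n y))) ∧ ¬ Cb n k y then (1:ℝ) else 0))
        ≤ ∑ y : Fin n → Bool, (2 ^ n / 2 - (if Cb n k y then (1:ℝ) else 0) * (2 ^ n / 2)) :=
          Finset.sum_le_sum fun y _ => hb y
      _ = (2 ^ n - P) * (2 ^ n / 2) := by
          rw [Finset.sum_sub_distrib, Finset.sum_const, ← Finset.sum_mul, ← hPdef]
          simp only [card_univ, hcardfun, nsmul_eq_mul]
          ring
  -- step 3: second indicator sum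
  have hI2 : (∑ x : Fin n → Bool, ∑ y : Fin n → Bool,
      (if (y (g x) ≠ y (g (neg n x))) ∧ Cb n k y then (1:ℝ) else 0))
      ≤ P * (2 * (ε * 2 ^ n)) := by
    rw [Finset.sum_comm]
    have hb : ∀ y : Fin n → Bool,
        (∑ x : Fin n → Bool, if (y (g x) ≠ y (g (neg n x))) ∧ Cb n k y then (1:ℝ) else 0)
        ≤ (if Cb n k y then (1:ℝ) else 0) * (2 * (ε * 2 ^ n)) := by
      intro y
      by_cases hC : Cb n k y
      · rw [if_pos hC, one_mul]
        have hpt : ∀ x : Fin n → Bool,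
            (if (y (g x) ≠ y (g (neg n x))) ∧ Cb n k y then (1:ℝ) else 0)
            ≤ (if k ≤ (g x).val + 1 then (1:ℝ) else 0)
              + (if k ≤ (g (neg n x)).val + 1 then (1:ℝ) else 0) := by
          intro x
          by_cases h1 : k ≤ (g x).val + 1
          · split_ifs <;> norm_num
          · by_cases h2 : k ≤ (g (neg n x)).val + 1
            · split_ifs <;> norm_num
            · have hgx : (g x).val + 2 ≤ k := by omega
              have hgx' : (g (neg n x)).val + 2 ≤ k := by omega
              have hyy : y (g x) = y (g (neg n x)) := hC _ _ hgx hgx'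
              simp [hyy, h1, h2]
        calc (∑ x : Fin n → Bool, if (y (g x) ≠ y (g (neg n x))) ∧ Cb n k y then (1:ℝ) else 0)
            ≤ ∑ x : Fin n → Bool, ((if k ≤ (g x).val + 1 then (1:ℝ) else 0)
                + (if k ≤ (g (neg n x)).val + 1 then (1:ℝ) else 0)) :=
              Finset.sum_le_sum fun x _ => hpt x
          _ = (∑ x : Fin n → Bool, if k ≤ (g x).val + 1 then (1:ℝ) else 0)
              + (∑ x : Fin n → Bool, if k ≤ (g (neg n x)).val + 1 then (1:ℝ) else 0) :=
              Finset.sum_add_distrib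
          _ = 2 * (∑ x : Fin n → Bool, if k ≤ (g x).val + 1 then (1:ℝ) else 0) := by
              rw [hBneg]; ring
          _ ≤ 2 * (ε * 2 ^ n) := by linarith
      · simp [hC]
    calc (∑ y : Fin n → Bool, ∑ x : Fin n → Bool,
          (if (y (g x) ≠ y (g (neg n x))) ∧ Cb n k y then (1:ℝ) else 0))
        ≤ ∑ y : Fin n → Bool, (if Cb n k y then (1:ℝ) else 0) * (2 * (ε * 2 ^ n)) :=
          Finset.sum_le_sum fun y _ => hb y
      _ = P * (2 * (ε * 2 ^ n)) := by rw [← Finset.sum_mul, ← hPdef]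
  -- combine
  have hmain : T ≤ (2 ^ n - P) * (2 ^ n / 2) + P * (2 * (ε * 2 ^ n)) := by
    calc T ≤ _ + _ := hTle
      _ ≤ (2 ^ n - P) * (2 ^ n / 2) + P * (2 * (ε * 2 ^ n)) := add_le_add hI1 hI2
  have hPge : (2:ℝ) ^ ((2:ℤ) - k) * 2 ^ n ≤ P := count_Cb n k hn hk
  -- finish
  unfold Ex2
  rw [← hTdef, div_le_iff₀ (by positivity : (0:ℝ) < 2 ^ (2 * n))]
  have h2n : (2:ℝ) ^ (2 * n) = 2 ^ n * 2 ^ n := by rw [two_mul, pow_add]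
  rw [h2n]
  have hzz : (2:ℝ) ^ ((2:ℤ) - k) = 2 * (2:ℝ) ^ (-(k:ℤ) + 1) := by
    rw [show ((2:ℤ) - k) = 1 + (-(k:ℤ) + 1) by ring, zpow_add₀ (two_ne_zero), zpow_one]
  rw [hzz] at hPge
  have hfac : (0:ℝ) ≤ 2 ^ n * (1 / 2 - 2 * ε) := by
    have : (0:ℝ) ≤ 1 / 2 - 2 * ε := by linarith
    positivity
  have hkey : 2 * (2:ℝ) ^ (-(k:ℤ) + 1) * 2 ^ n * (2 ^ n * (1 / 2 - 2 * ε))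
      ≤ P * (2 ^ n * (1 / 2 - 2 * ε)) := mul_le_mul_of_nonneg_right hPge hfac
  nlinarith [hmain, hkey]

/-- if Pr[g(X) ≥ k] ≤ ε then
    E[X_{f(Y)}·Y_{g(X)}] ≤ 1/2 − (1−4ε)·2^{−k+1}.
    Here the index of `g x` in `{1,…,n}` is `(g x).val + 1`. -/
theorem stmt10 (n : ℕ) (k : ℕ) (hk : 2 ≤ k) (ε : ℝ) (hε0 : 0 < ε) (hε1 : ε < 1 / 4)
    (f g : (Fin n → Bool) → Fin n)
    (hg : Pr n (fun x => k ≤ (g x).val + 1) ≤ ε) :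
    Ex2 n (fun x y => chi (x (f y)) * chi (y (g x))) ≤
      1 / 2 - (1 - 4 * ε) * (2 : ℝ) ^ (-(k : ℤ) + 1) := by
  cases n with
  | zero => exact (f (fun i => i.elim0)).elim0
  | succ m => exact stmt10_main (m + 1) k (Nat.succ_pos m) hk ε hε0 hε1 f g hg
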